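/- arXiv:2601.16812 — 2 statements merged into one kernel-verified Lean document; each statement's English description precedes it below -/
import Mathlib

section
/- Let φ_j : ℝⁿ → ℝ, j = 1,…,N, be differentiable and set φ(x) = (1/N)·Σ_{j=1}^N φ_j(x). Assume φ is L-smooth, φ(x) ≥ φ* for all x ∈ ℝⁿ, and the Strong Growth Condition holds with constant ρ > 0. Fix z⁰ ∈ ℝⁿ and η = 1/(ρ·L), and for each index sequence σ : {0,…,T−1} → {1,…,N} define the SGD trajectory z_σ(0) = z⁰, z_σ(t+1) = z_σ(t) − η·∇φ_{σ(t)}(z_σ(t)). Let ε > 0. If T is a positive integer with T ≥ 2·ρ·L·(φ(z⁰) − φ*)/ε², then the expected gradient norm of an iterate drawn uniformly at random from the first T iterates satisfies N^{−T}·Σ_σ (1/T)·Σ_{t=0}^{T−1} ‖∇φ(z_σ(t))‖ ≤ ε. -/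
open InnerProductSpace Set intervalIntegral

local notation "⟪" x ", " y "⟫" => @inner ℝ _ _ x y

section aux
variable {E : Type*} [NormedAddCommGroup E] [InnerProductSpace ℝ E] [CompleteSpace E]

lemma grad_avg {N : ℕ} (φ : Fin N → E → ℝ) (hφj : ∀ j, Differentiable ℝ (φ j)) (x : E) :
    gradient (fun x => (1 / N : ℝ) * ∑ j, φ j x) x = (1 / N : ℝ) • ∑ j, gradient (φ j) x := by
  have h : HasFDerivAt (fun x => (1 / N : ℝ) * ∑ j, φ j x)
      ((1 / N : ℝ) • ∑ j, fderiv ℝ (φ j) x) x :=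
    (HasFDerivAt.fun_sum (fun j _ => ((hφj j) x).hasFDerivAt)).const_mul _
  rw [h.hasGradientAt.gradient, map_smul, map_sum]
  rfl

lemma descent (f : E → ℝ) (hf : ContDiff ℝ 1 f) (L : ℝ)
    (hLip : ∀ x y, ‖gradient f x - gradient f y‖ ≤ L * ‖x - y‖) (x y : E) :
    f y ≤ f x + ⟪gradient f x, y - x⟫ + L / 2 * ‖y - x‖ ^ 2 := by
  set v := y - x with hv
  have hdiff : Differentiable ℝ f := hf.differentiable one_ne_zero
  have hpath : ∀ s : ℝ, HasDerivAt (fun s : ℝ => f (x + s • v)) ⟪gradient f (x + s • v), v⟫ s := by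
    intro s
    have hp : HasDerivAt (fun s : ℝ => x + s • v) v s := by
      simpa using ((hasDerivAt_id s).smul_const v).const_add x
    have hfd : HasFDerivAt f (toDual ℝ E (gradient f (x + s • v))) (x + s • v) :=
      ((hdiff (x + s • v)).hasGradientAt).hasFDerivAt
    convert hfd.comp_hasDerivAt s hp using 1
    all_goals rfl
  have hgradcont : Continuous (fun z => gradient f z) := by
    have : Continuous (fun z => fderiv ℝ f z) := hf.continuous_fderiv one_ne_zero
    exact (LinearIsometryEquiv.continuous (toDual ℝ E).symm).comp this
  have hcont : Continuous (fun s : ℝ => ⟪gradient f (x + s • v), v⟫) :=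
    Continuous.inner (hgradcont.comp (by continuity)) continuous_const
  have hFTC : f y - f x = ∫ s in (0:ℝ)..1, ⟪gradient f (x + s • v), v⟫ := by
    have := integral_eq_sub_of_hasDerivAt (f := fun s : ℝ => f (x + s • v))
      (fun s _ => hpath s) (hcont.intervalIntegrable 0 1)
    simpa [hv] using this.symm
  have hbound : ∀ s ∈ Icc (0:ℝ) 1,
      ⟪gradient f (x + s • v), v⟫ ≤ ⟪gradient f x, v⟫ + L * ‖v‖ ^ 2 * s := by
    intro s hs
    have h1 : ⟪gradient f (x + s • v), v⟫ - ⟪gradient f x, v⟫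
        = ⟪gradient f (x + s • v) - gradient f x, v⟫ := by rw [inner_sub_left]
    have h2 : ⟪gradient f (x + s • v) - gradient f x, v⟫ ≤ L * (s * ‖v‖) * ‖v‖ := by
      calc ⟪gradient f (x + s • v) - gradient f x, v⟫
          ≤ ‖gradient f (x + s • v) - gradient f x‖ * ‖v‖ := real_inner_le_norm _ _
        _ ≤ (L * ‖(x + s • v) - x‖) * ‖v‖ :=
            mul_le_mul_of_nonneg_right (hLip _ _) (norm_nonneg _)
        _ = L * (s * ‖v‖) * ‖v‖ := by
            rw [add_sub_cancel_left, norm_smul, Real.norm_eq_abs, abs_of_nonneg hs.1]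
    nlinarith [h1, h2]
  have hint : (∫ s in (0:ℝ)..1, ⟪gradient f (x + s • v), v⟫)
      ≤ ∫ s in (0:ℝ)..1, (⟪gradient f x, v⟫ + L * ‖v‖ ^ 2 * s) := by
    apply integral_mono_on (by norm_num) (hcont.intervalIntegrable 0 1)
      ((by continuity : Continuous fun s : ℝ =>
        ⟪gradient f x, v⟫ + L * ‖v‖ ^ 2 * s).intervalIntegrable 0 1)
    intro s hs; exact hbound s hs
  have hval : (∫ s in (0:ℝ)..1, (⟪gradient f x, v⟫ + L * ‖v‖ ^ 2 * s))
      = ⟪gradient f x, v⟫ + L / 2 * ‖v‖ ^ 2 := by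
    rw [integral_add (intervalIntegrable_const) (by
      exact (continuous_const.mul continuous_id).intervalIntegrable 0 1)]
    rw [integral_const_mul, integral_id]
    simp
    ring
  nlinarith [hFTC, hint, hval]

end aux

lemma sum_dep {T N : ℕ} (hN : 0 < N) {β : Type*} (t0 : Fin T)
    (P : (Fin T → Fin N) → β) (hP : ∀ σ j, P (Function.update σ t0 j) = P σ)
    (G : β → Fin N → ℝ) :
    ∑ σ : Fin T → Fin N, ∑ j, G (P σ) j = N * ∑ σ : Fin T → Fin N, G (P σ) (σ t0) := by
  classical
  set e := Equiv.funSplitAt t0 (Fin N) with he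
  have hsymm : ∀ (j j' : Fin N) (g : {i // i ≠ t0} → Fin N),
      e.symm (j, g) = Function.update (e.symm (j', g)) t0 j := by
    intro j j' g
    funext i
    simp only [he, Equiv.funSplitAt_symm_apply, Function.update]
    split_ifs with h1
    · subst h1; rfl
    · rfl
  have hPe : ∀ (j : Fin N) (g : {i // i ≠ t0} → Fin N),
      P (e.symm (j, g)) = P (e.symm (⟨0, hN⟩, g)) := fun j g => by
    rw [hsymm j ⟨0, hN⟩ g, hP]
  have hval : ∀ (j : Fin N) (g : {i // i ≠ t0} → Fin N), (e.symm (j, g)) t0 = j := by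
    intro j g; simp [he, Equiv.funSplitAt_symm_apply]
  have h1 : ∑ σ : Fin T → Fin N, G (P σ) (σ t0)
      = ∑ g : {i // i ≠ t0} → Fin N, ∑ j, G (P (e.symm (⟨0, hN⟩, g))) j := by
    rw [← Equiv.sum_comp e.symm (fun σ => G (P σ) (σ t0)), Fintype.sum_prod_type]
    rw [Finset.sum_comm]
    congr 1; funext g; congr 1; funext j
    rw [hPe j g, hval j g]
  have h2 : ∑ σ : Fin T → Fin N, ∑ j, G (P σ) j
      = N * ∑ g : {i // i ≠ t0} → Fin N, ∑ j, G (P (e.symm (⟨0, hN⟩, g))) j := by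
    rw [← Equiv.sum_comp e.symm (fun σ => ∑ j, G (P σ) j), Fintype.sum_prod_type]
    have : ∀ j' : Fin N, ∑ g : {i // i ≠ t0} → Fin N, ∑ j, G (P (e.symm (j', g))) j
        = ∑ g : {i // i ≠ t0} → Fin N, ∑ j, G (P (e.symm (⟨0, hN⟩, g))) j := by
      intro j'; congr 1; funext g; rw [hPe j' g]
    rw [Finset.sum_congr rfl (fun j' _ => this j')]
    simp [Finset.sum_const, mul_comm]
  rw [h1, h2]

/-- SGD trajectory: `z 0 = z0`, `z (t+1) = z t - η • ∇φ_{σ t} (z t)`. -/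
noncomputable def sgdTraj {n N : ℕ} (φ : Fin N → EuclideanSpace ℝ (Fin n) → ℝ)
    (η : ℝ) (z0 : EuclideanSpace ℝ (Fin n)) (σ : ℕ → Fin N) :
    ℕ → EuclideanSpace ℝ (Fin n)
  | 0 => z0
  | t + 1 => sgdTraj φ η z0 σ t - η • gradient (φ (σ t)) (sgdTraj φ η z0 σ t)

lemma sgdTraj_congr {n N : ℕ} (φ : Fin N → EuclideanSpace ℝ (Fin n) → ℝ)
    (η : ℝ) (z0 : EuclideanSpace ℝ (Fin n)) (σ σ' : ℕ → Fin N) (t : ℕ)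
    (h : ∀ s < t, σ s = σ' s) : sgdTraj φ η z0 σ t = sgdTraj φ η z0 σ' t := by
  induction t with
  | zero => rfl
  | succ t ih =>
    have h' := ih (fun s hs => h s (hs.trans (Nat.lt_succ_self t)))
    show sgdTraj φ η z0 σ t - η • gradient (φ (σ t)) (sgdTraj φ η z0 σ t) = _
    rw [h', h t (Nat.lt_succ_self t)]
    rfl

lemma telescope (S Q : ℕ → ℝ) (c : ℝ) (T : ℕ)
    (h : ∀ t < T, S (t+1) ≤ S t - c * Q t) :
    c * ∑ t ∈ Finset.range T, Q t ≤ S 0 - S T := by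
  induction T with
  | zero => simp
  | succ T ih =>
    have h1 := ih (fun t ht => h t (ht.trans (Nat.lt_succ_self T)))
    have h2 := h T (Nat.lt_succ_self T)
    rw [Finset.sum_range_succ, mul_add]
    linarith

set_option maxHeartbeats 1000000 in
theorem stmt6 {n N : ℕ} (hN : 0 < N)
    (φ : Fin N → EuclideanSpace ℝ (Fin n) → ℝ) (hφj : ∀ j, Differentiable ℝ (φ j))
    (Φ : EuclideanSpace ℝ (Fin n) → ℝ) (hΦ : Φ = fun x => (1 / N : ℝ) * ∑ j, φ j x)
    (L : ℝ) (hL : 0 < L) (hΦsmooth : ContDiff ℝ 1 Φ)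
    (hΦLip : ∀ x y, ‖gradient Φ x - gradient Φ y‖ ≤ L * ‖x - y‖)
    (φstar : ℝ) (hbound : ∀ x, φstar ≤ Φ x)
    (ρ : ℝ) (hρ : 0 < ρ)
    (hSGC : ∀ x, (1 / N : ℝ) * ∑ j, ‖gradient (φ j) x‖ ^ 2 ≤ ρ * ‖gradient Φ x‖ ^ 2)
    (z0 : EuclideanSpace ℝ (Fin n))
    (η : ℝ) (hη : η = 1 / (ρ * L))
    (ε : ℝ) (hε : 0 < ε)
    (T : ℕ) (hTpos : 0 < T)
    (hT : 2 * ρ * L * (Φ z0 - φstar) / ε ^ 2 ≤ (T : ℝ)) :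
    ((N : ℝ) ^ T)⁻¹ *
      ∑ σ : Fin T → Fin N, ((1 / T : ℝ) * ∑ t ∈ Finset.range T,
        ‖gradient Φ
          (sgdTraj φ η z0 (fun s => if h : s < T then σ ⟨s, h⟩ else ⟨0, hN⟩) t)‖) ≤
      ε := by
  classical
  have hNR : (0:ℝ) < N := Nat.cast_pos.mpr hN
  have hηpos : 0 < η := by rw [hη]; positivity
  have hηρL : η * (ρ * L) = 1 := by rw [hη]; field_simp
  set Z : (Fin T → Fin N) → ℕ → EuclideanSpace ℝ (Fin n) :=
    fun σ t => sgdTraj φ η z0 (fun s => if h : s < T then σ ⟨s, h⟩ else ⟨0, hN⟩) t with hZ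
  -- gradient facts
  have F1 : ∀ x, gradient Φ x = (1 / N : ℝ) • ∑ j, gradient (φ j) x := by
    intro x; rw [hΦ]; exact grad_avg φ hφj x
  have hsumj : ∀ x, ∑ j, gradient (φ j) x = (N : ℝ) • gradient Φ x := by
    intro x
    rw [F1 x, smul_smul]
    rw [show (N:ℝ) * (1/N) = 1 by field_simp, one_smul]
  have F2 : ∀ x, ∑ j, ⟪gradient Φ x, gradient (φ j) x⟫ = N * ‖gradient Φ x‖ ^ 2 := by
    intro x
    rw [← inner_sum, hsumj x, real_inner_smul_right, real_inner_self_eq_norm_sq]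
  have hSGC' : ∀ x, ∑ j, ‖gradient (φ j) x‖ ^ 2 ≤ N * (ρ * ‖gradient Φ x‖ ^ 2) := by
    intro x
    have h := hSGC x
    rw [div_mul_eq_mul_div, div_le_iff₀ hNR] at h
    nlinarith [h]
  have hTR : (0:ℝ) < T := Nat.cast_pos.mpr hTpos
  -- basic trajectory facts
  have hZ0 : ∀ σ, Z σ 0 = z0 := fun σ => rfl
  have hZsucc : ∀ (σ : Fin T → Fin N) (t : ℕ) (ht : t < T),
      Z σ (t+1) = Z σ t - η • gradient (φ (σ ⟨t, ht⟩)) (Z σ t) := by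
    intro σ t ht
    show sgdTraj φ η z0 _ t - η • gradient
      (φ ((fun s => if h : s < T then σ ⟨s, h⟩ else ⟨0, hN⟩) t)) (sgdTraj φ η z0 _ t) = _
    simp only [dif_pos ht]
    rfl
  have hZupd : ∀ (t : ℕ) (ht : t < T) (σ : Fin T → Fin N) (j : Fin N),
      Z (Function.update σ ⟨t, ht⟩ j) t = Z σ t := by
    intro t ht σ j
    apply sgdTraj_congr
    intro s hs
    have hsT : s < T := hs.trans ht
    simp only [dif_pos hsT]
    apply Function.update_of_ne
    exact Fin.ne_of_val_ne (Nat.ne_of_lt hs)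
  set S : ℕ → ℝ := fun t => ∑ σ : Fin T → Fin N, Φ (Z σ t) with hS
  set Q : ℕ → ℝ := fun t => ∑ σ : Fin T → Fin N, ‖gradient Φ (Z σ t)‖ ^ 2 with hQ
  have hQnonneg : ∀ t, 0 ≤ Q t := fun t => Finset.sum_nonneg (fun σ _ => by positivity)
  -- one-step descent in expectation
  have step : ∀ t, t < T → S (t+1) ≤ S t - η/2 * Q t := by
    intro t ht
    set t0 : Fin T := ⟨t, ht⟩ with ht0
    have per : ∀ σ : Fin T → Fin N, Φ (Z σ (t+1)) ≤ Φ (Z σ t)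
        - η * ⟪gradient Φ (Z σ t), gradient (φ (σ t0)) (Z σ t)⟫
        + (L/2 * η^2) * ‖gradient (φ (σ t0)) (Z σ t)‖ ^ 2 := by
      intro σ
      have hd := descent Φ hΦsmooth L hΦLip (Z σ t) (Z σ (t+1))
      rw [hZsucc σ t ht] at hd ⊢
      rw [sub_sub_cancel_left, inner_neg_right, real_inner_smul_right,
        norm_neg, norm_smul, Real.norm_eq_abs, abs_of_pos hηpos] at hd
      nlinarith [hd]
    have hsum : S (t+1) ≤ ∑ σ : Fin T → Fin N, (Φ (Z σ t)
        - η * ⟪gradient Φ (Z σ t), gradient (φ (σ t0)) (Z σ t)⟫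
        + (L/2 * η^2) * ‖gradient (φ (σ t0)) (Z σ t)‖ ^ 2) :=
      Finset.sum_le_sum (fun σ _ => per σ)
    set E1 : ℝ := ∑ σ : Fin T → Fin N,
      ⟪gradient Φ (Z σ t), gradient (φ (σ t0)) (Z σ t)⟫ with hE1def
    set E2 : ℝ := ∑ σ : Fin T → Fin N, ‖gradient (φ (σ t0)) (Z σ t)‖ ^ 2 with hE2def
    have hsplit : ∑ σ : Fin T → Fin N, (Φ (Z σ t)
        - η * ⟪gradient Φ (Z σ t), gradient (φ (σ t0)) (Z σ t)⟫
        + (L/2 * η^2) * ‖gradient (φ (σ t0)) (Z σ t)‖ ^ 2)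
        = S t - η * E1 + (L/2 * η^2) * E2 := by
      rw [Finset.sum_add_distrib, Finset.sum_sub_distrib, ← Finset.mul_sum, ← Finset.mul_sum]
    have hE1 : (N:ℝ) * E1 = (N:ℝ) * Q t := by
      have hd := sum_dep hN t0 (fun σ => Z σ t) (fun σ j => hZupd t ht σ j)
        (fun x j => ⟪gradient Φ x, gradient (φ j) x⟫)
      rw [← hd, Finset.sum_congr rfl (fun σ _ => F2 (Z σ t)), ← Finset.mul_sum]
    have hE1' : E1 = Q t := mul_left_cancel₀ (ne_of_gt hNR) hE1
    have hE2 : (N:ℝ) * E2 ≤ (N:ℝ) * (ρ * Q t) := by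
      have hd := sum_dep hN t0 (fun σ => Z σ t) (fun σ j => hZupd t ht σ j)
        (fun x j => ‖gradient (φ j) x‖ ^ 2)
      rw [← hd]
      calc ∑ σ : Fin T → Fin N, ∑ j, ‖gradient (φ j) (Z σ t)‖ ^ 2
          ≤ ∑ σ : Fin T → Fin N, (N:ℝ) * (ρ * ‖gradient Φ (Z σ t)‖ ^ 2) :=
            Finset.sum_le_sum (fun σ _ => hSGC' (Z σ t))
        _ = (N:ℝ) * (ρ * Q t) := by
            rw [← Finset.mul_sum]
            congr 1
            rw [← Finset.mul_sum]
    have hE2' : E2 ≤ ρ * Q t := le_of_mul_le_mul_left hE2 hNR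
    have hfin : S t - η * E1 + (L/2 * η^2) * E2 ≤ S t - η/2 * Q t := by
      rw [hE1']
      have h2 : (L/2 * η^2) * E2 ≤ (L/2 * η^2) * (ρ * Q t) :=
        mul_le_mul_of_nonneg_left hE2' (by positivity)
      have h3 : (L/2 * η^2) * (ρ * Q t) = η/2 * Q t := by
        linear_combination (Q t * η / 2) * hηρL
      linarith
    calc S (t+1) ≤ _ := hsum
      _ = S t - η * E1 + (L/2 * η^2) * E2 := hsplit
      _ ≤ S t - η/2 * Q t := hfin
  -- telescoping
  set K : ℝ := (N:ℝ)^T with hKdef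
  have hK : 0 < K := by positivity
  set D : ℝ := Φ z0 - φstar with hDdef
  have hD : 0 ≤ D := sub_nonneg.mpr (hbound z0)
  have htel := telescope S Q (η/2) T step
  have hS0 : S 0 = K * Φ z0 := by
    rw [hS]
    simp only [hZ0]
    rw [Finset.sum_const, Finset.card_univ, Fintype.card_fun, nsmul_eq_mul]
    simp only [Fintype.card_fin]
    push_cast [hKdef]
    ring
  have hST : K * φstar ≤ S T := by
    calc K * φstar = ∑ _σ : Fin T → Fin N, φstar := by
          rw [Finset.sum_const, Finset.card_univ, Fintype.card_fun, nsmul_eq_mul]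
          simp only [Fintype.card_fin]
          push_cast [hKdef]
          ring
      _ ≤ S T := Finset.sum_le_sum (fun σ _ => hbound (Z σ T))
  set B : ℝ := ∑ t ∈ Finset.range T, Q t with hBdef
  have hBnonneg : 0 ≤ B := Finset.sum_nonneg (fun t _ => hQnonneg t)
  have hB1 : η/2 * B ≤ K * D := by
    have : S 0 - S T ≤ K * D := by rw [hS0, hDdef]; nlinarith [hST]
    linarith [htel]
  have hB2 : B ≤ 2*ρ*L*(K*D) := by
    have hm := mul_le_mul_of_nonneg_left hB1 (le_of_lt (show (0:ℝ) < 2*ρ*L by positivity))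
    have e : 2*ρ*L*(η/2*B) = B := by linear_combination B * hηρL
    calc B = 2*ρ*L*(η/2*B) := e.symm
      _ ≤ 2*ρ*L*(K*D) := hm
  -- Cauchy-Schwarz and conclusion
  set A : ℝ := ∑ σ : Fin T → Fin N, ∑ t ∈ Finset.range T, ‖gradient Φ (Z σ t)‖ with hAdef
  have hA2 : A^2 ≤ (K * T) * B := by
    have hAs : A = ∑ p ∈ Finset.univ ×ˢ Finset.range T,
        ‖gradient Φ (Z p.1 p.2)‖ := by rw [hAdef, Finset.sum_product]
    have hBs : (∑ p ∈ Finset.univ ×ˢ Finset.range T,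
        ‖gradient Φ (Z p.1 p.2)‖ ^ 2) = B := by
      rw [Finset.sum_product, hBdef]
      rw [Finset.sum_comm]
    have hcard : (((Finset.univ ×ˢ Finset.range T : Finset ((Fin T → Fin N) × ℕ))).card : ℝ) = K * T := by
      rw [Finset.card_product, Finset.card_univ, Fintype.card_fun, Finset.card_range]
      simp only [Fintype.card_fin]
      push_cast [hKdef]
      ring
    have := sq_sum_le_card_mul_sum_sq
      (s := Finset.univ ×ˢ Finset.range T)
      (f := fun p : (Fin T → Fin N) × ℕ => ‖gradient Φ (Z p.1 p.2)‖)
    rw [← hAs, hBs, hcard] at this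
    exact this
  show K⁻¹ * ∑ σ : Fin T → Fin N, ((1 / T : ℝ) * ∑ t ∈ Finset.range T,
      ‖gradient Φ (Z σ t)‖) ≤ ε
  rw [← Finset.mul_sum, ← hAdef]
  have hKT : (0:ℝ) < K * T := by positivity
  have hsq : (K⁻¹ * (1/(T:ℝ) * A))^2 ≤ ε^2 := by
    have e : (K⁻¹ * (1/(T:ℝ) * A))^2 = A^2 / (K*T)^2 := by
      field_simp
    rw [e, div_le_iff₀ (by positivity)]
    have c2 : (K*T)*B ≤ (K*T)*(2*ρ*L*(K*D)) := mul_le_mul_of_nonneg_left hB2 hKT.le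
    have c3 : 2*ρ*L*D ≤ T*ε^2 := by
      rw [div_le_iff₀ (by positivity)] at hT
      linarith [hT]
    have c4 : (K*T)*(2*ρ*L*(K*D)) ≤ ε^2*(K*T)^2 := by
      nlinarith [mul_le_mul_of_nonneg_left c3 (show (0:ℝ) ≤ K^2*(T:ℝ) by positivity)]
    linarith
  exact le_of_pow_le_pow_left₀ two_ne_zero hε.le hsq
end

section
/- Let f : ℝⁿ → ℝ and g_i : ℝⁿ → ℝ, i = 1,…,m, be continuously differentiable. For τ > 0 let P_τ(x) = f(x) + (τ/2)·Σ_{i=1}^m max(0, g_i(x))², so that ∇P_τ(x) = ∇f(x) + τ·Σ_{i=1}^m max(0, g_i(x))·∇g_i(x). Let (x^k) ⊆ ℝⁿ converge to x̄, let τ_k → ∞, and suppose ‖∇P_{τ_k}(x^k)‖ → 0. If the E-LICQ holds at x̄ (the gradients ∇g_i(x̄) for i with g_i(x̄) ≥ 0 are linearly independent), then x̄ is feasible: g_i(x̄) ≤ 0 for all i = 1,…,m. -/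
open Filter

lemma hasDerivAt_max_sq (t : ℝ) :
    HasDerivAt (fun s : ℝ => max 0 s ^ 2) (2 * max 0 t) t := by
  rcases lt_trichotomy t 0 with h | h | h
  · have hev : (fun s : ℝ => max 0 s ^ 2) =ᶠ[nhds t] fun _ => (0 : ℝ) := by
      filter_upwards [Iio_mem_nhds h] with s hs
      simp [max_eq_left (le_of_lt (Set.mem_Iio.mp hs))]
    have := (hasDerivAt_const t (0 : ℝ)).congr_of_eventuallyEq hev
    simpa [max_eq_left h.le] using this
  · subst h
    rw [hasDerivAt_iff_isLittleO]
    simp only [max_self, mul_zero, sub_zero, smul_zero, ne_eq]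
    rw [Asymptotics.isLittleO_iff]
    intro ε hε
    filter_upwards [Metric.ball_mem_nhds (0 : ℝ) hε] with s hs
    rw [Metric.mem_ball, Real.dist_eq, sub_zero] at hs
    have h1 : max 0 s ≤ |s| := by
      rcases le_total s 0 with h' | h'
      · simp [max_eq_left h', abs_nonneg]
      · simp [max_eq_right h', le_abs_self]
    have h2 : (0 : ℝ) ≤ max 0 s := le_max_left _ _
    have : max 0 s ^ 2 ≤ |s| * |s| := by nlinarith
    calc ‖max 0 s ^ 2 - 0 ^ 2‖ = max 0 s ^ 2 := by
          rw [show (0:ℝ)^2 = 0 by norm_num, sub_zero, Real.norm_eq_abs,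
            abs_of_nonneg (by positivity)]
      _ ≤ |s| * |s| := this
      _ ≤ ε * ‖s‖ := by rw [Real.norm_eq_abs]; nlinarith [abs_nonneg s]
  · have hev : (fun s : ℝ => max 0 s ^ 2) =ᶠ[nhds t] fun s => s ^ 2 := by
      filter_upwards [Ioi_mem_nhds h] with s hs
      simp [max_eq_right (le_of_lt (Set.mem_Ioi.mp hs))]
    have h2 : HasDerivAt (fun s : ℝ => s ^ 2) (2 * t) t := by
      simpa using (hasDerivAt_pow 2 t)
    have := h2.congr_of_eventuallyEq hev
    simpa [max_eq_right h.le] using this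

theorem stmt10 {n m : ℕ} (f : EuclideanSpace ℝ (Fin n) → ℝ)
    (g : Fin m → EuclideanSpace ℝ (Fin n) → ℝ)
    (hf : ContDiff ℝ 1 f) (hg : ∀ i, ContDiff ℝ 1 (g i))
    (P : ℝ → EuclideanSpace ℝ (Fin n) → ℝ)
    (hP : P = fun τ x => f x + (τ / 2) * ∑ i, max 0 (g i x) ^ 2)
    (x : ℕ → EuclideanSpace ℝ (Fin n)) (xbar : EuclideanSpace ℝ (Fin n))
    (hx : Tendsto x atTop (nhds xbar))
    (τ : ℕ → ℝ) (hτpos : ∀ k, 0 < τ k) (hτ : Tendsto τ atTop atTop)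
    (hgrad : Tendsto (fun k => ‖gradient (P (τ k)) (x k)‖) atTop (nhds 0))
    (hELICQ : LinearIndependent ℝ
      (fun i : {i : Fin m // 0 ≤ g i xbar} => gradient (g i.1) xbar)) :
    ∀ i, g i xbar ≤ 0 := by
  classical
  have hgd : ∀ i, Differentiable ℝ (g i) := fun i => (hg i).differentiable one_ne_zero
  have hfd : Differentiable ℝ f := hf.differentiable one_ne_zero
  have hgi : ∀ (i : Fin m) (y : EuclideanSpace ℝ (Fin n)),
      HasFDerivAt (fun z => max 0 (g i z) ^ 2)
      ((2 * max 0 (g i y)) • fderiv ℝ (g i) y) y := by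
    intro i y
    exact (hasDerivAt_max_sq (g i y)).comp_hasFDerivAt y ((hgd i y).hasFDerivAt)
  have hPf : ∀ (t : ℝ) (y : EuclideanSpace ℝ (Fin n)), HasFDerivAt (P t)
      (fderiv ℝ f y + (t / 2) • ∑ i, (2 * max 0 (g i y)) • fderiv ℝ (g i) y) y := by
    intro t y
    rw [hP]
    exact (hfd y).hasFDerivAt.add
      ((HasFDerivAt.fun_sum (fun i _ => hgi i y)).const_mul (t / 2))
  have hgradP : ∀ (t : ℝ) (y : EuclideanSpace ℝ (Fin n)),
      gradient (P t) y = gradient f y + t • ∑ i, max 0 (g i y) • gradient (g i) y := by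
    intro t y
    have h1 : fderiv ℝ (P t) y
        = fderiv ℝ f y + (t / 2) • ∑ i, (2 * max 0 (g i y)) • fderiv ℝ (g i) y :=
      (hPf t y).fderiv
    show (InnerProductSpace.toDual ℝ (EuclideanSpace ℝ (Fin n))).symm (fderiv ℝ (P t) y) = _
    rw [h1, map_add, LinearIsometryEquiv.map_smul, map_sum]
    congr 1
    rw [Finset.smul_sum, Finset.smul_sum]
    refine Finset.sum_congr rfl fun i _ => ?_
    rw [LinearIsometryEquiv.map_smul]
    show (t / 2) • ((2 * max 0 (g i y)) • gradient (g i) y) = _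
    rw [smul_smul, smul_smul]
    ring_nf
  have hcontgrad : ∀ (u : EuclideanSpace ℝ (Fin n) → ℝ), ContDiff ℝ 1 u →
      Continuous (gradient u) := by
    intro u hu
    have h2 : Continuous (fderiv ℝ u) := hu.continuous_fderiv one_ne_zero
    exact (InnerProductSpace.toDual ℝ (EuclideanSpace ℝ (Fin n))).symm.continuous.comp h2
  have hSlim1 : Tendsto (fun k => ∑ i, max 0 (g i (x k)) • gradient (g i) (x k)) atTop
      (nhds (∑ i, max 0 (g i xbar) • gradient (g i) xbar)) := by
    apply tendsto_finset_sum
    intro i _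
    exact (Tendsto.max tendsto_const_nhds (((hg i).continuous.tendsto xbar).comp hx)).smul
      (((hcontgrad (g i) (hg i)).tendsto xbar).comp hx)
  have hSeq : ∀ k, (∑ i, max 0 (g i (x k)) • gradient (g i) (x k))
      = (τ k)⁻¹ • (gradient (P (τ k)) (x k) - gradient f (x k)) := by
    intro k
    rw [hgradP (τ k) (x k)]
    rw [add_sub_cancel_left, smul_smul, inv_mul_cancel₀ (hτpos k).ne', one_smul]
  have hτinv : Tendsto (fun k => (τ k)⁻¹) atTop (nhds 0) := hτ.inv_tendsto_atTop
  have hv : Tendsto (fun k => gradient (P (τ k)) (x k)) atTop (nhds 0) := by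
    rw [← tendsto_zero_iff_norm_tendsto_zero] at hgrad
    exact hgrad
  have hw : Tendsto (fun k => gradient f (x k)) atTop (nhds (gradient f xbar)) :=
    ((hcontgrad f hf).tendsto xbar).comp hx
  have hSlim2 : Tendsto (fun k => ∑ i, max 0 (g i (x k)) • gradient (g i) (x k)) atTop
      (nhds 0) := by
    have h3 : Tendsto (fun k => (τ k)⁻¹ • (gradient (P (τ k)) (x k) - gradient f (x k)))
        atTop (nhds ((0 : ℝ) • ((0 : EuclideanSpace ℝ (Fin n)) - gradient f xbar))) :=
      hτinv.smul (hv.sub hw)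
    rw [zero_smul] at h3
    exact h3.congr fun k => (hSeq k).symm
  have hsum0 : ∑ i, max 0 (g i xbar) • gradient (g i) xbar = 0 :=
    tendsto_nhds_unique hSlim1 hSlim2
  have hfilter : ∑ i ∈ Finset.univ.filter (fun i => 0 ≤ g i xbar),
      max 0 (g i xbar) • gradient (g i) xbar
      = ∑ i, max 0 (g i xbar) • gradient (g i) xbar := by
    apply Finset.sum_filter_of_ne
    intro i _ hne
    by_contra hcon
    push_neg at hcon
    rw [max_eq_left (le_of_lt hcon)] at hne
    simp at hne
  have hsub : ∑ i ∈ Finset.univ.filter (fun i => 0 ≤ g i xbar),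
      max 0 (g i xbar) • gradient (g i) xbar
      = ∑ i : {i : Fin m // 0 ≤ g i xbar}, max 0 (g i.1 xbar) • gradient (g i.1) xbar :=
    Finset.sum_subtype _ (by simp) _
  have hzero : ∀ i : {i : Fin m // 0 ≤ g i xbar}, max 0 (g i.1 xbar) = 0 := by
    apply Fintype.linearIndependent_iff.mp hELICQ
      (fun i : {i : Fin m // 0 ≤ g i xbar} => max 0 (g i.1 xbar))
    rw [← hsub, hfilter, hsum0]
  intro i
  by_cases hi : 0 ≤ g i xbar
  · have h4 := hzero ⟨i, hi⟩
    simpa [max_eq_right hi] using h4.le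
  · exact (not_le.mp hi).le
end
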